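/- Let Lambda = K_sigma Q/<Z> be a finite-dimensional semilinear gentle algebra with embedding Delta into Gamma = K_{sigma'}Q^✂(Z). For a vertex v of Q, let U = Lambda e_v / A e_v be the corresponding simple left Lambda-module (A the arrow ideal). Then the K-dimension of (Gamma/rad Gamma) ⊗_{Lambda/rad Lambda} U is 1 if v is non-relational, and 2 if v is relational. In particular Gamma ⊗_Lambda U has length at most 2. -/

import Mathlib

attribute [local instance] Classical.propDecidable

/-- A quiver: vertices, arrows, head and tail maps. -/
structure Quiv where
  V : Type
  A : Type
  h : A → V
  t : A → V

/-- A (possibly empty) list of arrows is a path when consecutive arrows compose: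
`t aᵢ = h aᵢ₊₁` (paths are written right-to-left as in the paper). -/
def Quiv.IsPath (Q : Quiv) (p : List Q.A) : Prop :=
  p.Chain' (fun x y => Q.t x = Q.h y)

/-- A locally gentle pair `(Q,Z)`: `Z` is a set of length-2 paths (pairs `(b,a)` with
`t b = h a`), every vertex is head (resp. tail) of at most two arrows, and each arrow
extends in at most one way inside `Z` and at most one way outside `Z` on each side. -/
structure LocallyGentle (Q : Quiv) (Z : Set (Q.A × Q.A)) : Prop where
  comp : ∀ p ∈ Z, Q.t p.1 = Q.h p.2
  head_two : ∀ (v : Q.V) (a b c : Q.A),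
    Q.h a = v → Q.h b = v → Q.h c = v → a = b ∨ a = c ∨ b = c
  tail_two : ∀ (v : Q.V) (a b c : Q.A),
    Q.t a = v → Q.t b = v → Q.t c = v → a = b ∨ a = c ∨ b = c
  rel_right : ∀ b a a' : Q.A, (b, a) ∈ Z → (b, a') ∈ Z → a = a'
  adm_right : ∀ b a a' : Q.A, Q.t b = Q.h a → Q.t b = Q.h a' →
    (b, a) ∉ Z → (b, a') ∉ Z → a = a'
  rel_left : ∀ b c c' : Q.A, (c, b) ∈ Z → (c', b) ∈ Z → c = c'
  adm_left : ∀ b c c' : Q.A, Q.t c = Q.h b → Q.t c' = Q.h b →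
    (c, b) ∉ Z → (c', b) ∉ Z → c = c'

/-- A vertex is relational if some relation `ba ∈ Z` passes through it,
i.e. `t b = v = h a`. -/
def Relational (Q : Quiv) (Z : Set (Q.A × Q.A)) (v : Q.V) : Prop :=
  ∃ b a : Q.A, (b, a) ∈ Z ∧ Q.t b = v ∧ Q.h a = v

/-- A choice, for every relational vertex `v`, of a relation `(b v, a v) ∈ Z` through `v`. -/
structure RelSelection (Q : Quiv) (Z : Set (Q.A × Q.A)) where
  b : Q.V → Q.A
  a : Q.V → Q.A
  spec : ∀ v : Q.V, Relational Q Z v →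
    (b v, a v) ∈ Z ∧ Q.t (b v) = v ∧ Q.h (a v) = v

/-- The Zembyk excision `Q^✂(Z)`: the quiver obtained by simultaneously taking the levee
at every relational vertex (equivalently, by iterating levees until no relation remains;
the result is independent of order).  A relational vertex `u` is replaced by
`u(♯) = Sum.inr (u, true)` and `u(♭) = Sum.inr (u, false)`. -/
noncomputable def excision (Q : Quiv) (Z : Set (Q.A × Q.A)) (s : RelSelection Q Z) : Quiv where
  V := {u : Q.V // ¬ Relational Q Z u} ⊕ ({u : Q.V // Relational Q Z u} × Bool)
  A := Q.A
  h := fun x =>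
    if hx : Relational Q Z (Q.h x) then
      Sum.inr (⟨Q.h x, hx⟩, if (s.b (Q.h x), x) ∈ Z then false else true)
    else Sum.inl ⟨Q.h x, hx⟩
  t := fun x =>
    if hx : Relational Q Z (Q.t x) then
      Sum.inr (⟨Q.t x, hx⟩, if (x, s.a (Q.t x)) ∈ Z then true else false)
    else Sum.inl ⟨Q.t x, hx⟩

/-- A presentation of the semilinear path algebra `K_σ Q` on a ring `Λ`:
a `K`-ring structure `ι`, trivial paths `e v`, arrows `ar x`, the defining relations,
and freeness: the paths of `Q` (trivial and nontrivial) form a left `K`-basis. -/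
structure SLPA (K : Type) [DivisionRing K] (Q : Quiv) [Fintype Q.V]
    (σ : Q.A → K ≃+* K) (Λ : Type) [Ring Λ] where
  ι : K →+* Λ
  e : Q.V → Λ
  ar : Q.A → Λ
  sum_e : (∑ v : Q.V, e v) = 1
  e_idem : ∀ v : Q.V, e v * e v = e v
  e_orth : ∀ u v : Q.V, u ≠ v → e u * e v = 0
  e_comm : ∀ (v : Q.V) (lam : K), e v * ι lam = ι lam * e v
  he_ar : ∀ x : Q.A, e (Q.h x) * ar x = ar x
  ar_te : ∀ x : Q.A, ar x * e (Q.t x) = ar x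
  semilinear : ∀ (x : Q.A) (lam : K), ar x * ι lam = ι (σ x lam) * ar x
  free : Function.Bijective
    (fun c : (Q.V ⊕ {p : List Q.A // p ≠ [] ∧ Q.IsPath p}) →₀ K =>
      c.sum fun p lam => ι lam * Sum.elim e (fun q => (q.1.map ar).prod) p)

/-- A presentation of the semilinear (locally) gentle algebra `K_σ Q / ⟨Z⟩` on a ring `Λ`:
the semilinear path algebra relations, the zero-relations from `Z`, and freeness:
the `Z`-avoiding (admissible) paths form a left `K`-basis. -/
structure GentlePres (K : Type) [DivisionRing K] (Q : Quiv) [Fintype Q.V]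
    (σ : Q.A → K ≃+* K) (Z : Set (Q.A × Q.A)) (Λ : Type) [Ring Λ] where
  ι : K →+* Λ
  e : Q.V → Λ
  ar : Q.A → Λ
  sum_e : (∑ v : Q.V, e v) = 1
  e_idem : ∀ v : Q.V, e v * e v = e v
  e_orth : ∀ u v : Q.V, u ≠ v → e u * e v = 0
  e_comm : ∀ (v : Q.V) (lam : K), e v * ι lam = ι lam * e v
  he_ar : ∀ x : Q.A, e (Q.h x) * ar x = ar x
  ar_te : ∀ x : Q.A, ar x * e (Q.t x) = ar x
  semilinear : ∀ (x : Q.A) (lam : K), ar x * ι lam = ι (σ x lam) * ar x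
  rel : ∀ p ∈ Z, ar p.1 * ar p.2 = 0
  free : Function.Bijective
    (fun c : (Q.V ⊕ {p : List Q.A // p ≠ [] ∧ Q.IsPath p ∧
        p.Chain' (fun x y => (x, y) ∉ Z)}) →₀ K =>
      c.sum fun p lam => ι lam * Sum.elim e (fun q => (q.1.map ar).prod) p)

/-- The Jacobson radical of a ring, via its quasi-regularity characterisation:
`x ∈ rad R` iff `1 - y*x` is a unit for every `y`. -/
def radSet (R : Type) [Ring R] : Set R := {x : R | ∀ y : R, IsUnit (1 - y * x)}

section Aux

open Submodule
set_option linter.unusedSectionVars false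

variable {K : Type} [DivisionRing K] {Q₀ : Quiv} [Fintype Q₀.V]
  {σ₀ : Q₀.A → K ≃+* K} {Γ : Type} [Ring Γ] [Module K Γ]

namespace SLPAAux

variable (P : SLPA K Q₀ σ₀ Γ)

/-- Product of the arrows along a list. -/
def w (l : List Q₀.A) : Γ := (l.map P.ar).prod

theorem w_nil : w P ([] : List Q₀.A) = 1 := rfl

theorem w_cons (x : Q₀.A) (l : List Q₀.A) : w P (x :: l) = P.ar x * w P l := by
  simp [w]

theorem w_append (l m : List Q₀.A) : w P (l ++ m) = w P l * w P m := by
  simp [w]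

theorem w_not_path : ∀ l : List Q₀.A, ¬ Q₀.IsPath l → w P l = 0 := by
  intro l
  induction l with
  | nil => intro h; exact absurd List.isChain_nil h
  | cons x m ih =>
    intro h
    match m, ih, h with
    | [], _, h => exact absurd (List.isChain_singleton x) h
    | y :: m', ih, h =>
      simp only [Quiv.IsPath, List.Chain', List.isChain_cons_cons] at h
      by_cases hxy : Q₀.t x = Q₀.h y
      · have hm : ¬ Q₀.IsPath (y :: m') := fun hp => h ⟨hxy, hp⟩
        rw [w_cons, ih hm, mul_zero]
      · have h2 : P.ar x * P.ar y = 0 := by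
          conv_lhs => rw [← P.ar_te x, ← P.he_ar y]
          rw [mul_assoc, ← mul_assoc (P.e (Q₀.t x)), P.e_orth _ _ hxy, zero_mul, mul_zero]
        rw [w_cons, w_cons, ← mul_assoc, h2, zero_mul]

theorem e_mul_w (x : Q₀.A) (l : List Q₀.A) (u : Q₀.V) :
    P.e u * w P (x :: l) = w P (x :: l) ∨ P.e u * w P (x :: l) = 0 := by
  by_cases h : u = Q₀.h x
  · left; subst h
    rw [w_cons, ← mul_assoc]
    conv_lhs => rw [← P.he_ar x, ← mul_assoc, P.e_idem]
    rw [P.he_ar, ← w_cons]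
  · right
    rw [w_cons, ← mul_assoc]
    conv_lhs => rw [← P.he_ar x, ← mul_assoc, P.e_orth _ _ h]
    rw [zero_mul, zero_mul]

theorem w_mul_e : ∀ l : List Q₀.A, l ≠ [] → ∀ u : Q₀.V,
    w P l * P.e u = w P l ∨ w P l * P.e u = 0 := by
  intro l
  induction l with
  | nil => intro h; exact absurd rfl h
  | cons x m ih =>
    intro _ u
    match m, ih with
    | [], _ =>
      by_cases h : Q₀.t x = u
      · left; subst h
        rw [w_cons, w_nil, mul_one, P.ar_te]
      · right
        rw [w_cons, w_nil, mul_one]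
        conv_lhs => rw [← P.ar_te x, mul_assoc, P.e_orth _ _ h]
        rw [mul_zero]
    | y :: m', ih =>
      rcases ih (by simp) u with h | h
      · left; rw [w_cons, mul_assoc, h]
      · right; rw [w_cons, mul_assoc, h, mul_zero]

theorem w_mul_iota : ∀ (l : List Q₀.A) (lam : K),
    ∃ mu : K, w P l * P.ι lam = P.ι mu * w P l := by
  intro l
  induction l with
  | nil => intro lam; exact ⟨lam, by rw [w_nil, one_mul, mul_one]⟩
  | cons x m ih =>
    intro lam
    obtain ⟨mu, hmu⟩ := ih lam
    exact ⟨σ₀ x mu, by rw [w_cons, mul_assoc, hmu, ← mul_assoc, P.semilinear, mul_assoc]⟩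

/-- The basis vectors of `Γ`. -/
def vec : (Q₀.V ⊕ {p : List Q₀.A // p ≠ [] ∧ Q₀.IsPath p}) → Γ :=
  Sum.elim P.e (fun q => w P q.1)

variable (hs : ∀ (lam : K) (x : Γ), lam • x = P.ι lam * x)
include hs

theorem lc_eq : ⇑(Finsupp.linearCombination K (vec P)) =
    fun c : (Q₀.V ⊕ {p : List Q₀.A // p ≠ [] ∧ Q₀.IsPath p}) →₀ K =>
      c.sum fun p lam => P.ι lam * Sum.elim P.e (fun q => (q.1.map P.ar).prod) p := by
  funext c
  rw [Finsupp.linearCombination_apply]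
  refine Finsupp.sum_congr (fun i _ => ?_)
  rw [hs]
  rfl

theorem span_vec : Submodule.span K (Set.range (vec P)) = ⊤ := by
  have h1 : LinearMap.range (Finsupp.linearCombination K (vec P)) = ⊤ := by
    rw [LinearMap.range_eq_top, lc_eq P hs]
    exact P.free.surjective
  rw [Finsupp.range_linearCombination] at h1
  exact h1

/-- The path basis of `Γ`. -/
noncomputable def bas : Module.Basis (Q₀.V ⊕ {p : List Q₀.A // p ≠ [] ∧ Q₀.IsPath p}) K Γ :=
  Module.Basis.mk (v := vec P)
    (by
      rw [linearIndependent_iff_injective_finsuppLinearCombination]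
      have : ⇑(Finsupp.linearCombination K (vec P)) =
        fun c : (Q₀.V ⊕ {p : List Q₀.A // p ≠ [] ∧ Q₀.IsPath p}) →₀ K =>
          c.sum fun p lam => P.ι lam * Sum.elim P.e (fun q => (q.1.map P.ar).prod) p :=
        lc_eq P hs
      rw [this]
      exact P.free.injective)
    (by rw [span_vec P hs])

theorem bas_apply (i) : bas P hs i = vec P i := Module.Basis.mk_apply _ _ _

/-- Right multiplication is `K`-linear. -/
def rmul (g : Γ) : Γ →ₗ[K] Γ where
  toFun x := x * g
  map_add' a b := add_mul a b g
  map_smul' c x := by simp only [RingHom.id_apply]; rw [hs, hs, mul_assoc]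

theorem rmul_apply (g x : Γ) : rmul P hs g x = x * g := rfl

/-- Left multiplication by a trivial path is `K`-linear. -/
def lmulE (u : Q₀.V) : Γ →ₗ[K] Γ where
  toFun x := P.e u * x
  map_add' a b := mul_add _ a b
  map_smul' c x := by
    simp only [RingHom.id_apply]
    rw [hs, hs, ← mul_assoc, P.e_comm, mul_assoc]

omit hs in
/-- The span of nontrivial products of at least `k` arrows. -/
def Jk (k : ℕ) : Submodule K Γ :=
  Submodule.span K {x : Γ | ∃ l : List Q₀.A, k ≤ l.length ∧ x = w P l}

omit hs in
theorem w_mem_Jk {k : ℕ} {l : List Q₀.A} (hl : k ≤ l.length) : w P l ∈ Jk P k :=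
  Submodule.subset_span ⟨l, hl, rfl⟩

theorem forall_mul_mem (g : Γ) (T : Submodule K Γ)
    (he : ∀ u : Q₀.V, P.e u * g ∈ T)
    (hw : ∀ l : List Q₀.A, l ≠ [] → Q₀.IsPath l → w P l * g ∈ T) :
    ∀ x : Γ, x * g ∈ T := by
  intro x
  have hle : Submodule.span K (Set.range (vec P)) ≤ T.comap (rmul P hs g) := by
    rw [Submodule.span_le]
    rintro y ⟨i, rfl⟩
    cases i with
    | inl u => exact he u
    | inr q => exact hw q.1 q.2.1 q.2.2
  exact hle (by rw [span_vec P hs]; trivial)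

theorem Jk_mul_iota {k : ℕ} {x : Γ} (hx : x ∈ Jk P k) (lam : K) :
    x * P.ι lam ∈ Jk P k := by
  have hle : Jk P k ≤ (Jk P k).comap (rmul P hs (P.ι lam)) := by
    rw [Jk, Submodule.span_le]
    rintro y ⟨l, hl, rfl⟩
    obtain ⟨mu, hmu⟩ := w_mul_iota P l lam
    show w P l * P.ι lam ∈ Jk P k
    rw [hmu, ← hs]
    exact Submodule.smul_mem _ _ (w_mem_Jk P hl)
  exact hle hx

theorem mul_mem_Jk {k : ℕ} (hk : k ≠ 0) {j : Γ} (hj : j ∈ Jk P k) :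
    ∀ y : Γ, y * j ∈ Jk P k := by
  induction hj using Submodule.span_induction with
  | mem x h =>
    obtain ⟨l, hl, rfl⟩ := h
    intro y
    refine forall_mul_mem P hs (w P l) (Jk P k) ?_ ?_ y
    · intro u
      match l, hl with
      | [], hl => simp at hl; omega
      | a :: m, hl =>
        rcases e_mul_w P a m u with h | h <;> rw [h]
        · exact w_mem_Jk P hl
        · exact zero_mem _
    · intro m _ _
      rw [← w_append]
      exact w_mem_Jk P (by rw [List.length_append]; omega)
  | zero => intro y; rw [mul_zero]; exact zero_mem _
  | add a b _ _ ha hb => intro y; rw [mul_add]; exact add_mem (ha y) (hb y)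
  | smul c x _ hx =>
    intro y
    have h1 : y * (c • x) = (y * P.ι c) * x := by rw [hs, ← mul_assoc]
    rw [h1]
    exact hx _

theorem Jk_mul_mem {k : ℕ} (hk : k ≠ 0) {j : Γ} (hj : j ∈ Jk P k) :
    ∀ y : Γ, j * y ∈ Jk P k := by
  induction hj using Submodule.span_induction with
  | mem x h =>
    obtain ⟨l, hl, rfl⟩ := h
    have hlne : l ≠ [] := by intro h'; subst h'; simp at hl; omega
    intro y
    have hy : y ∈ Submodule.span K (Set.range (vec P)) := by
      rw [span_vec P hs]; trivial
    induction hy using Submodule.span_induction with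
    | mem z hz =>
      obtain ⟨i, rfl⟩ := hz
      cases i with
      | inl u =>
        rcases w_mul_e P l hlne u with h | h
        · rw [show vec P (Sum.inl u) = P.e u from rfl, h]; exact w_mem_Jk P hl
        · rw [show vec P (Sum.inl u) = P.e u from rfl, h]; exact zero_mem _
      | inr q =>
        rw [show vec P (Sum.inr q) = w P q.1 from rfl, ← w_append]
        exact w_mem_Jk P (by rw [List.length_append]; omega)
    | zero => rw [mul_zero]; exact zero_mem _
    | add a b _ _ ha hb => rw [mul_add]; exact add_mem ha hb
    | smul c z _ hz =>
      obtain ⟨mu, hmu⟩ := w_mul_iota P l c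
      have h1 : w P l * (c • z) = mu • (w P l * z) := by
        rw [hs, ← mul_assoc, hmu, hs, mul_assoc]
      rw [h1]
      exact Submodule.smul_mem _ _ hz
  | zero => intro y; rw [zero_mul]; exact zero_mem _
  | add a b _ _ ha hb => intro y; rw [add_mul]; exact add_mem (ha y) (hb y)
  | smul c x _ hx =>
    intro y
    have h1 : (c • x) * y = c • (x * y) := by rw [hs, hs, mul_assoc]
    rw [h1]
    exact Submodule.smul_mem _ _ (hx y)

theorem J_mul_Jk {k : ℕ} {m : Γ} (hm : m ∈ Jk P k) :
    ∀ z ∈ Jk P 1, z * m ∈ Jk P (k + 1) := by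
  induction hm using Submodule.span_induction with
  | mem x h =>
    obtain ⟨l, hl, rfl⟩ := h
    intro z hz
    induction hz using Submodule.span_induction with
    | mem z' hz' =>
      obtain ⟨l', hl', rfl⟩ := hz'
      rw [← w_append]
      exact w_mem_Jk P (by rw [List.length_append]; omega)
    | zero => rw [zero_mul]; exact zero_mem _
    | add a b _ _ ha hb => rw [add_mul]; exact add_mem ha hb
    | smul c z' _ hz' =>
      have h1 : (c • z') * w P l = c • (z' * w P l) := by rw [hs, hs, mul_assoc]
      rw [h1]
      exact Submodule.smul_mem _ _ hz'
  | zero => intro z hz; rw [mul_zero]; exact zero_mem _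
  | add a b _ _ ha hb =>
    intro z hz
    rw [mul_add]
    exact add_mem (ha z hz) (hb z hz)
  | smul c x _ hx =>
    intro z hz
    have h1 : z * (c • x) = (z * P.ι c) * x := by rw [hs, ← mul_assoc]
    rw [h1]
    exact hx _ (Jk_mul_iota P hs hz c)

theorem pow_mem_Jk {z : Γ} (hz : z ∈ Jk P 1) : ∀ n : ℕ, z ^ (n + 1) ∈ Jk P (n + 1) := by
  intro n
  induction n with
  | zero => rw [pow_one]; exact hz
  | succ n ih =>
    rw [pow_succ'
      ]
    exact J_mul_Jk P hs ih z hz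

variable {N : ℕ}

omit hs in
theorem Jk_eq_bot (hN : ∀ l : List Q₀.A, N < l.length → w P l = 0) :
    Jk P (N + 1) = (⊥ : Submodule K Γ) := by
  rw [Jk, eq_bot_iff, Submodule.span_le]
  rintro x ⟨l, hl, rfl⟩
  rw [hN l (by omega)]
  exact zero_mem _

theorem J_le_radSet (hN : ∀ l : List Q₀.A, N < l.length → w P l = 0) :
    (Jk P 1 : Set Γ) ⊆ radSet Γ := by
  intro x hx y
  have h1 : y * x ∈ Jk P 1 := mul_mem_Jk P hs one_ne_zero hx y
  have h2 : (y * x) ^ (N + 1) = 0 := by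
    have h3 := pow_mem_Jk P hs h1 N
    rw [Jk_eq_bot P hN, Submodule.mem_bot] at h3
    exact h3
  exact IsNilpotent.isUnit_one_sub ⟨N + 1, h2⟩

/-- The coordinate functional at a trivial path. -/
noncomputable def fW (u : Q₀.V) : Γ →ₗ[K] K :=
  (Finsupp.lapply (Sum.inl u)).comp ((bas P hs).repr.toLinearMap)

theorem fW_apply (u : Q₀.V) (x : Γ) : fW P hs u x = (bas P hs).repr x (Sum.inl u) := rfl

theorem fW_e_self (u : Q₀.V) : fW P hs u (P.e u) = 1 := by
  rw [fW_apply, show P.e u = bas P hs (Sum.inl u) from (bas_apply P hs (Sum.inl u)).symm,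
    Module.Basis.repr_self, Finsupp.single_apply, if_pos rfl]

theorem fW_e_ne {u v : Q₀.V} (h : v ≠ u) : fW P hs u (P.e v) = 0 := by
  rw [fW_apply, show P.e v = bas P hs (Sum.inl v) from (bas_apply P hs (Sum.inl v)).symm,
    Module.Basis.repr_self, Finsupp.single_apply, if_neg (by simpa using h)]

theorem fW_w (u : Q₀.V) (l : List Q₀.A) (hl : l ≠ []) : fW P hs u (w P l) = 0 := by
  by_cases hp : Q₀.IsPath l
  · rw [fW_apply, show w P l = bas P hs (Sum.inr ⟨l, hl, hp⟩) from (bas_apply P hs (Sum.inr ⟨l, hl, hp⟩)).symm,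
      Module.Basis.repr_self, Finsupp.single_apply, if_neg (by simp)]
  · rw [w_not_path P l hp, map_zero]

theorem J_le_ker_fW (u : Q₀.V) : Jk P 1 ≤ LinearMap.ker (fW P hs u) := by
  rw [Jk, Submodule.span_le]
  rintro x ⟨l, hl, rfl⟩
  have hlne : l ≠ [] := by intro h'; subst h'; simp at hl
  rw [SetLike.mem_coe, LinearMap.mem_ker, fW_w P hs u l hlne]

theorem radSet_le_J (hN : ∀ l : List Q₀.A, N < l.length → w P l = 0) :
    radSet Γ ⊆ (Jk P 1 : Set Γ) := by
  intro x hx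
  have key : ∀ u : Q₀.V, fW P hs u x = 0 := by
    intro u
    by_contra h0
    set c : K := fW P hs u x with hc
    have hphi : ∀ z : Γ, P.e u * z - (fW P hs u z) • P.e u ∈ Jk P 1 := by
      set ψ : Γ →ₗ[K] Γ :=
        lmulE P hs u - (LinearMap.toSpanSingleton K Γ (P.e u)).comp (fW P hs u) with hψdef
      have hψ : ∀ z : Γ, ψ z = P.e u * z - (fW P hs u z) • P.e u := fun z => rfl
      intro z
      rw [← hψ]
      have hle : Submodule.span K (Set.range (vec P)) ≤ (Jk P 1).comap ψ := by
        rw [Submodule.span_le]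
        rintro y ⟨i, rfl⟩
        rw [SetLike.mem_coe, Submodule.mem_comap, hψ]
        cases i with
        | inl v =>
          by_cases huv : u = v
          · subst huv
            rw [show vec P (Sum.inl u) = P.e u from rfl, fW_e_self P hs, one_smul,
              P.e_idem, sub_self]
            exact zero_mem _
          · rw [show vec P (Sum.inl v) = P.e v from rfl, fW_e_ne P hs (fun h => huv h.symm),
              zero_smul, sub_zero, P.e_orth u v huv]
            exact zero_mem _
        | inr q =>
          rw [show vec P (Sum.inr q) = w P q.1 from rfl, fW_w P hs u q.1 q.2.1,
            zero_smul, sub_zero]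
          obtain ⟨a, m, hq⟩ := List.exists_cons_of_ne_nil q.2.1
          rw [hq]
          rcases e_mul_w P a m u with h | h <;> rw [h]
          · exact w_mem_Jk P (by simp)
          · exact zero_mem _
      exact hle (by rw [span_vec P hs]; trivial)
    set j : Γ := P.e u * x - c • P.e u with hjdef
    have hjJ : j ∈ Jk P 1 := hphi x
    have hex : P.e u * x = c • P.e u + j := by rw [hjdef, add_comm, sub_add_cancel]
    have hyx : (c⁻¹ • P.e u) * x = P.e u + c⁻¹ • j := by
      rw [hs, mul_assoc, ← hs, hex, smul_add, smul_smul, inv_mul_cancel₀ h0, one_smul]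
    have hu := hx (c⁻¹ • P.e u)
    rw [hyx] at hu
    obtain ⟨t, ht⟩ := hu
    have h1 : P.e u * (1 - (P.e u + c⁻¹ • j)) = -(P.e u * (c⁻¹ • j)) := by
      rw [mul_sub, mul_one, mul_add, P.e_idem, sub_add_eq_sub_sub, sub_self, zero_sub]
    have h2 : P.e u = -(P.e u * (c⁻¹ • j)) * ↑t⁻¹ := by
      calc P.e u = P.e u * (↑t * ↑t⁻¹) := by rw [Units.mul_inv, mul_one]
      _ = (P.e u * ↑t) * ↑t⁻¹ := by rw [mul_assoc]
      _ = -(P.e u * (c⁻¹ • j)) * ↑t⁻¹ := by rw [ht, h1]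
    have he_mem : P.e u ∈ Jk P 1 := by
      rw [h2]
      exact Jk_mul_mem P hs one_ne_zero
        (Submodule.neg_mem _ (mul_mem_Jk P hs one_ne_zero
          (Submodule.smul_mem _ _ hjJ) (P.e u))) (↑t⁻¹)
    have := J_le_ker_fW P hs u he_mem
    rw [LinearMap.mem_ker, fW_e_self P hs u] at this
    exact one_ne_zero this
  have hx2 : x = ((bas P hs).repr x).sum (fun i c => c • bas P hs i) := by
    conv_lhs => rw [← (bas P hs).linearCombination_repr x]
    rw [Finsupp.linearCombination_apply]
  rw [SetLike.mem_coe, hx2, Finsupp.sum]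
  refine Submodule.sum_mem _ ?_
  intro i _
  cases i with
  | inl u =>
    rw [show (bas P hs).repr x (Sum.inl u) = fW P hs u x from rfl, key u, zero_smul]
    exact zero_mem _
  | inr q =>
    refine Submodule.smul_mem _ _ ?_
    rw [bas_apply]
    exact w_mem_Jk P (show 1 ≤ q.1.length from List.length_pos_iff.mpr q.2.1)

theorem span_radSet_eq (hN : ∀ l : List Q₀.A, N < l.length → w P l = 0) :
    Submodule.span K (radSet Γ) = Jk P 1 := by
  apply le_antisymm
  · rw [Submodule.span_le]
    exact radSet_le_J P hs hN
  · rw [Jk, Submodule.span_le]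
    rintro x ⟨l, hl, rfl⟩
    exact Submodule.subset_span (J_le_radSet P hs hN (w_mem_Jk P hl))

end SLPAAux

end Aux

theorem excision_comp {Q : Quiv} {Z : Set (Q.A × Q.A)} (lg : LocallyGentle Q Z)
    (s : RelSelection Q Z) {x y : Q.A}
    (h : (excision Q Z s).t x = (excision Q Z s).h y) :
    Q.t x = Q.h y ∧ (x, y) ∉ Z := by
  simp only [excision] at h
  by_cases hx : Relational Q Z (Q.t x) <;> by_cases hy : Relational Q Z (Q.h y)
  · rw [dif_pos hx, dif_pos hy] at h
    rw [Sum.inr.injEq, Prod.mk.injEq, Subtype.mk.injEq] at h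
    obtain ⟨hth, hflag⟩ := h
    refine ⟨hth, fun hxy => ?_⟩
    obtain ⟨hba, hbt, hah⟩ := s.spec (Q.t x) hx
    rw [← hth] at hflag
    by_cases h1 : (x, s.a (Q.t x)) ∈ Z
    · have hy2 : y = s.a (Q.t x) := lg.rel_right x y _ hxy h1
      rw [if_pos h1, if_pos (show (s.b (Q.t x), y) ∈ Z by rw [hy2]; exact hba)] at hflag
      exact Bool.noConfusion hflag
    · rw [if_neg h1] at hflag
      by_cases h2 : (s.b (Q.t x), y) ∈ Z
      · have hx2 : x = s.b (Q.t x) := lg.rel_left y x _ hxy h2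
        exact h1 (by rw [← hx2] at hba; exact hba)
      · rw [if_neg h2] at hflag
        exact Bool.noConfusion hflag
  · rw [dif_pos hx, dif_neg hy] at h; exact absurd h (by simp)
  · rw [dif_neg hx, dif_pos hy] at h; exact absurd h (by simp)
  · rw [dif_neg hx, dif_neg hy] at h
    rw [Sum.inl.injEq, Subtype.mk.injEq] at h
    exact ⟨h, fun hxy => hx ⟨x, y, hxy, rfl, (lg.comp (x, y) hxy).symm⟩⟩
/-- For the embedding `Δ : Λ = K_σ Q/⟨Z⟩ → Γ = K_{σ'} Q^✂(Z)` and a vertex `v` of `Q`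
with simple module `U = Λe_v/Ae_v`, the `K`-dimension of
`(Γ/rad Γ) ⊗_{Λ/rad Λ} U ≅ (Γ/rad Γ)·Δ(e_v)` is `1` if `v` is non-relational and `2`
if `v` is relational; in particular `Γ ⊗_Λ U` has length at most 2. -/
theorem stmt11 (K : Type) [DivisionRing K] (Q : Quiv) [Fintype Q.V] [Finite Q.A]
    (Z : Set (Q.A × Q.A)) (lg : LocallyGentle Q Z)
    (hgentle : {p : List Q.A | Q.IsPath p ∧ p.Chain' (fun x y => (x, y) ∉ Z)}.Finite)
    (σ : Q.A → K ≃+* K) (s : RelSelection Q Z)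
    (Λ Γ : Type) [Ring Λ] [Ring Γ]
    (SΛ : GentlePres K Q σ Z Λ)
    [Fintype (excision Q Z s).V]
    (SΓ : SLPA K (excision Q Z s) σ Γ)
    [Module K Γ] (hsmul : ∀ (lam : K) (x : Γ), lam • x = SΓ.ι lam * x)
    (Δ : Λ →+* Γ) (hΔinj : Function.Injective Δ)
    (hΔι : ∀ lam : K, Δ (SΛ.ι lam) = SΓ.ι lam)
    (hΔar : ∀ x : Q.A, Δ (SΛ.ar x) = SΓ.ar x)
    (hΔe : ∀ v : Q.V, Δ (SΛ.e v) =
      if h : Relational Q Z v then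
        SΓ.e (Sum.inr (⟨v, h⟩, true)) + SΓ.e (Sum.inr (⟨v, h⟩, false))
      else SΓ.e (Sum.inl ⟨v, h⟩))
    (v : Q.V) :
    Module.finrank K
      ((Submodule.span K {y : Γ | ∃ x : Γ, y = x * Δ (SΛ.e v)}).map
        (Submodule.span K (radSet Γ)).mkQ) =
      (if Relational Q Z v then 2 else 1) := by
  classical
  have hsub : {p : List Q.A | (excision Q Z s).IsPath p} ⊆
      {p : List Q.A | Q.IsPath p ∧ p.Chain' (fun x y => (x, y) ∉ Z)} := by
    intro p hp
    exact ⟨List.IsChain.imp (fun a b hab => (excision_comp lg s hab).1) hp,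
      List.IsChain.imp (fun a b hab => (excision_comp lg s hab).2) hp⟩
  obtain ⟨N, hNb⟩ := ((hgentle.subset hsub).image List.length).bddAbove
  have hN : ∀ l : List (excision Q Z s).A, N < l.length → SLPAAux.w SΓ l = 0 := by
    intro l hl
    by_cases hp : (excision Q Z s).IsPath l
    · have := hNb (Set.mem_image_of_mem List.length hp)
      exact absurd this (not_le.mpr hl)
    · exact SLPAAux.w_not_path SΓ l hp
  have hJ : Submodule.span K (radSet Γ) = SLPAAux.Jk SΓ 1 :=
    SLPAAux.span_radSet_eq SΓ hsmul hN
  rw [hJ]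
  set J := SLPAAux.Jk SΓ 1 with hJdef
  by_cases hrel : Relational Q Z v
  · rw [if_pos hrel]
    set w₁ : (excision Q Z s).V := Sum.inr (⟨v, hrel⟩, true) with hw1
    set w₂ : (excision Q Z s).V := Sum.inr (⟨v, hrel⟩, false) with hw2
    have hne12 : w₁ ≠ w₂ := fun hcon => by
      rw [hw1, hw2] at hcon
      injection hcon with h'
      exact Bool.noConfusion (congrArg Prod.snd h')
    have hE : Δ (SΛ.e v) = SΓ.e w₁ + SΓ.e w₂ := by rw [hΔe v, dif_pos hrel]
    set c1 := J.mkQ (SΓ.e w₁) with hc1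
    set c2 := J.mkQ (SΓ.e w₂) with hc2
    have hmem1 : SΓ.e w₁ ∈ {y : Γ | ∃ x : Γ, y = x * Δ (SΛ.e v)} :=
      ⟨SΓ.e w₁, by rw [hE, mul_add, SΓ.e_idem, SΓ.e_orth _ _ hne12, add_zero]⟩
    have hmem2 : SΓ.e w₂ ∈ {y : Γ | ∃ x : Γ, y = x * Δ (SΛ.e v)} :=
      ⟨SΓ.e w₂, by rw [hE, mul_add, SΓ.e_idem, SΓ.e_orth _ _ (Ne.symm hne12), zero_add]⟩
    have hupper : ∀ x : Γ, x * Δ (SΛ.e v) ∈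
        (Submodule.span K {SΓ.e w₁, SΓ.e w₂} ⊔ J : Submodule K Γ) := by
      refine SLPAAux.forall_mul_mem SΓ hsmul _ _ ?_ ?_
      · intro u
        rw [hE, mul_add]
        by_cases h1 : u = w₁
        · subst h1
          rw [SΓ.e_idem, SΓ.e_orth _ _ hne12, add_zero]
          exact Submodule.mem_sup_left (Submodule.subset_span (by simp))
        · by_cases h2 : u = w₂
          · subst h2
            rw [SΓ.e_idem, SΓ.e_orth _ _ (Ne.symm hne12), zero_add]
            exact Submodule.mem_sup_left (Submodule.subset_span (by simp))
          · rw [SΓ.e_orth _ _ h1, SΓ.e_orth _ _ h2, add_zero]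
            exact zero_mem _
      · intro l hlne _
        have hwJ : SLPAAux.w SΓ l ∈ J := SLPAAux.w_mem_Jk SΓ (List.length_pos_iff.mpr hlne)
        have k : ∀ u : (excision Q Z s).V, SLPAAux.w SΓ l * SΓ.e u ∈ J := by
          intro u
          rcases SLPAAux.w_mul_e SΓ l hlne u with h | h <;> rw [h]
          exacts [hwJ, zero_mem _]
        rw [hE, mul_add]
        exact Submodule.mem_sup_right (add_mem (k w₁) (k w₂))
    have hmap : (Submodule.span K {y : Γ | ∃ x : Γ, y = x * Δ (SΛ.e v)}).map J.mkQ =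
        Submodule.span K {c1, c2} := by
      apply le_antisymm
      · rw [Submodule.map_span, Submodule.span_le]
        rintro _ ⟨z, ⟨x, rfl⟩, rfl⟩
        obtain ⟨a, ha, b, hb, hab⟩ := Submodule.mem_sup.mp (hupper x)
        have hb0 : J.mkQ b = 0 := by
          rw [Submodule.mkQ_apply, Submodule.Quotient.mk_eq_zero]; exact hb
        rw [← hab, map_add, hb0, add_zero]
        have h3 : J.mkQ a ∈ (Submodule.span K {SΓ.e w₁, SΓ.e w₂}).map J.mkQ :=
          Submodule.mem_map_of_mem ha
        rwa [Submodule.map_span, Set.image_pair] at h3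
      · rw [Submodule.span_le]
        rintro z hz
        simp only [Set.mem_insert_iff, Set.mem_singleton_iff] at hz
        rcases hz with rfl | rfl
        · exact Submodule.mem_map_of_mem (Submodule.subset_span hmem1)
        · exact Submodule.mem_map_of_mem (Submodule.subset_span hmem2)
    rw [hmap]
    set g1 := J.liftQ (SLPAAux.fW SΓ hsmul w₁) (SLPAAux.J_le_ker_fW SΓ hsmul w₁) with hg1
    set g2 := J.liftQ (SLPAAux.fW SΓ hsmul w₂) (SLPAAux.J_le_ker_fW SΓ hsmul w₂) with hg2
    have ge11 : g1 c1 = 1 := by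
      rw [hg1, hc1, Submodule.mkQ_apply, Submodule.liftQ_apply, SLPAAux.fW_e_self SΓ hsmul]
    have ge12 : g1 c2 = 0 := by
      rw [hg1, hc2, Submodule.mkQ_apply, Submodule.liftQ_apply,
        SLPAAux.fW_e_ne SΓ hsmul (Ne.symm hne12)]
    have ge21 : g2 c1 = 0 := by
      rw [hg2, hc1, Submodule.mkQ_apply, Submodule.liftQ_apply,
        SLPAAux.fW_e_ne SΓ hsmul hne12]
    have ge22 : g2 c2 = 1 := by
      rw [hg2, hc2, Submodule.mkQ_apply, Submodule.liftQ_apply, SLPAAux.fW_e_self SΓ hsmul]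
    have hli : LinearIndependent K ![c1, c2] := by
      rw [LinearIndependent.pair_iff]
      intro a b hab
      constructor
      · have h0 := congrArg g1 hab
        rw [map_add, map_smul, map_smul, map_zero, ge11, ge12, smul_eq_mul, smul_eq_mul,
          mul_one, mul_zero, add_zero] at h0
        exact h0
      · have h0 := congrArg g2 hab
        rw [map_add, map_smul, map_smul, map_zero, ge21, ge22, smul_eq_mul, smul_eq_mul,
          mul_one, mul_zero, zero_add] at h0
        exact h0
    have hrange : ({c1, c2} : Set _) = Set.range ![c1, c2] := by
      ext z
      simp only [Set.mem_insert_iff, Set.mem_singleton_iff, Set.mem_range, Fin.exists_fin_two,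
        Matrix.cons_val_zero, Matrix.cons_val_one, Matrix.head_cons]
      constructor
      · rintro (rfl | rfl)
        exacts [Or.inl rfl, Or.inr rfl]
      · rintro (h | h)
        exacts [Or.inl h.symm, Or.inr h.symm]
    rw [hrange, finrank_span_eq_card hli, Fintype.card_fin]
  · rw [if_neg hrel]
    set v₀ : (excision Q Z s).V := Sum.inl ⟨v, hrel⟩ with hv0
    have hE : Δ (SΛ.e v) = SΓ.e v₀ := by rw [hΔe v, dif_neg hrel]
    set c1 := J.mkQ (SΓ.e v₀) with hc1
    have hmem1 : SΓ.e v₀ ∈ {y : Γ | ∃ x : Γ, y = x * Δ (SΛ.e v)} :=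
      ⟨SΓ.e v₀, by rw [hE, SΓ.e_idem]⟩
    have hupper : ∀ x : Γ, x * Δ (SΛ.e v) ∈
        (Submodule.span K {SΓ.e v₀} ⊔ J : Submodule K Γ) := by
      refine SLPAAux.forall_mul_mem SΓ hsmul _ _ ?_ ?_
      · intro u
        rw [hE]
        by_cases h1 : u = v₀
        · subst h1
          rw [SΓ.e_idem]
          exact Submodule.mem_sup_left (Submodule.subset_span (Set.mem_singleton _))
        · rw [SΓ.e_orth _ _ h1]
          exact zero_mem _
      · intro l hlne _
        rw [hE]
        rcases SLPAAux.w_mul_e SΓ l hlne v₀ with h | h <;> rw [h]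
        · exact Submodule.mem_sup_right (SLPAAux.w_mem_Jk SΓ (List.length_pos_iff.mpr hlne))
        · exact zero_mem _
    have hmap : (Submodule.span K {y : Γ | ∃ x : Γ, y = x * Δ (SΛ.e v)}).map J.mkQ =
        Submodule.span K {c1} := by
      apply le_antisymm
      · rw [Submodule.map_span, Submodule.span_le]
        rintro _ ⟨z, ⟨x, rfl⟩, rfl⟩
        obtain ⟨a, ha, b, hb, hab⟩ := Submodule.mem_sup.mp (hupper x)
        have hb0 : J.mkQ b = 0 := by
          rw [Submodule.mkQ_apply, Submodule.Quotient.mk_eq_zero]; exact hb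
        rw [← hab, map_add, hb0, add_zero]
        have h3 : J.mkQ a ∈ (Submodule.span K {SΓ.e v₀}).map J.mkQ :=
          Submodule.mem_map_of_mem ha
        rwa [Submodule.map_span, Set.image_singleton] at h3
      · rw [Submodule.span_le]
        rintro z hz
        rw [Set.mem_singleton_iff] at hz
        subst hz
        exact Submodule.mem_map_of_mem (Submodule.subset_span hmem1)
    rw [hmap]
    have hc1ne : c1 ≠ 0 := by
      intro h0
      have hmem : SΓ.e v₀ ∈ J := by
        rwa [hc1, Submodule.mkQ_apply, Submodule.Quotient.mk_eq_zero] at h0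
      have h2 := SLPAAux.J_le_ker_fW SΓ hsmul v₀ hmem
      rw [LinearMap.mem_ker, SLPAAux.fW_e_self SΓ hsmul] at h2
      exact one_ne_zero h2
    exact finrank_span_singleton hc1ne
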